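/- Let X₁, X₂ be compact Hausdorff spaces, let N₁, N₂ be nonzero normed spaces over 𝕜, and let T : C(X₁, N₁) → C(X₂, N₂) be a strictly biseparating linear bijection. Then there exist a homeomorphism φ : X₂ → X₁ and, for each x ∈ X₂, a linear bijection J(x) : N₁ → N₂, such that (T F)(x) = (J(x))(F(φ(x))) for every x ∈ X₂ and every F ∈ C(X₁, N₁). -/

import Mathlib

set_option synthInstance.maxHeartbeats 400000
set_option maxHeartbeats 1000000

open Set Filter Topology

section Aux

variable {𝕜 : Type*} [RCLike 𝕜]
variable {M N : Type*} [NormedAddCommGroup M] [NormedSpace 𝕜 M]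
  [NormedAddCommGroup N] [NormedSpace 𝕜 N]
variable {X Y : Type*} [TopologicalSpace X] [CompactSpace X] [T2Space X]
  [TopologicalSpace Y] [CompactSpace Y] [T2Space Y]

/-- `x` is a "null point" for evaluation of `T ·` at `y`: some open neighborhood `U` of `x`
is such that every function with cozero set inside `U` is sent by `T` to a function
vanishing at `y`. -/
def NullPt (T : C(X, M) →ₗ[𝕜] C(Y, N)) (y : Y) (x : X) : Prop :=
  ∃ U : Set X, IsOpen U ∧ x ∈ U ∧ ∀ G : C(X, M), (∀ z, G z ≠ 0 → z ∈ U) → T G y = 0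

/-- Partition of unity lemma: if every point of the closure of the cozero set of `F` is a
null point for `y`, then `T F y = 0`. -/
lemma pu_lemma (T : C(X, M) →ₗ[𝕜] C(Y, N)) (y : Y) (F : C(X, M))
    (h : ∀ x ∈ closure {z | F z ≠ 0}, NullPt T y x) : T F y = 0 := by
  classical
  set K := closure {z | F z ≠ 0} with hKdef
  have hKc : IsClosed K := isClosed_closure
  have hKcpt : IsCompact K := hKc.isCompact
  choose U hUo hxU hUnull using fun x : K => h x.1 x.2
  obtain ⟨t, ht⟩ := hKcpt.elim_finite_subcover U hUo
    (fun z hz => Set.mem_iUnion.2 ⟨⟨z, hz⟩, hxU ⟨z, hz⟩⟩)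
  let ι := Option {i : K // i ∈ t}
  let V : ι → Set X := fun o => match o with
    | none => Kᶜ
    | some i => U i.1
  have hVo : ∀ i, IsOpen (V i) := by
    rintro (_ | i)
    · exact hKc.isOpen_compl
    · exact hUo i.1
  have hVcov : (univ : Set X) ⊆ ⋃ i, V i := by
    intro z _
    by_cases hz : z ∈ K
    · rcases Set.mem_iUnion₂.1 (ht hz) with ⟨i, hi, hzi⟩
      exact Set.mem_iUnion.2 ⟨some ⟨i, hi⟩, hzi⟩
    · exact Set.mem_iUnion.2 ⟨none, hz⟩
  obtain ⟨p, hp⟩ := PartitionOfUnity.exists_isSubordinate isClosed_univ V hVo hVcov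
  let q : ι → C(X, M) := fun i =>
    ⟨fun x => ((p i x : ℝ) : 𝕜) • F x,
      ((RCLike.continuous_ofReal).comp (p i).continuous).smul F.continuous⟩
  have hq_zero : ∀ i x, p i x = 0 → q i x = 0 := by
    intro i x hx; simp [q, hx]
  have hFq : F = ∑ i, q i := by
    ext x
    have h1 : (∑ i, q i) x = ∑ i, ((p i x : ℝ) : 𝕜) • F x := by
      rw [ContinuousMap.sum_apply]
      rfl
    have h2 : (∑ i : ι, ((p i x : ℝ) : 𝕜)) = ((∑ i : ι, p i x : ℝ) : 𝕜) := by
      norm_cast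
    have h3 : (∑ i : ι, p i x) = 1 := by
      rw [← finsum_eq_sum_of_fintype]; exact p.sum_eq_one (mem_univ x)
    rw [h1, ← Finset.sum_smul, h2, h3]
    simp
  have hsplit : T F y = ∑ i, T (q i) y := by
    rw [hFq, map_sum, ContinuousMap.sum_apply]
  rw [hsplit]
  apply Finset.sum_eq_zero
  rintro (_ | i) _
  · have hq0 : q none = 0 := by
      ext x
      by_cases hFx : F x = 0
      · simp [q, hFx]
      · have hxK : x ∈ K := subset_closure hFx
        have hpx : p none x = 0 := by
          by_contra hpx
          have hmem : x ∈ tsupport ⇑(p none) := subset_tsupport _ hpx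
          exact (hp none hmem : x ∈ Kᶜ) hxK
        simp [q, hpx]
    rw [hq0, map_zero]
    rfl
  · apply hUnull i.1 (q (some i))
    intro z hz
    have hpz : p (some i) z ≠ 0 := fun h0 => hz (hq_zero _ _ h0)
    exact hp (some i) (subset_tsupport _ hpz)

/-- Existence of the support map `φ` together with its two key properties. -/
lemma exists_phi (T : C(X, M) →ₗ[𝕜] C(Y, N)) [Nontrivial N]
    (hd : ∀ F₁ F₂ : C(X, M), (∀ x, F₁ x = 0 ∨ F₂ x = 0) → ∀ y, T F₁ y = 0 ∨ T F₂ y = 0)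
    (hsurj : ∀ G : C(Y, N), ∃ F, T F = G) :
    ∃ φ : Y → X, Continuous φ ∧
      (∀ y (U : Set X), IsOpen U → φ y ∈ U →
        ∃ F : C(X, M), (∀ z : X, F z ≠ 0 → z ∈ U) ∧ T F y ≠ 0) ∧
      (∀ y (F : C(X, M)) (W : Set X), IsOpen W → φ y ∈ W → (∀ z ∈ W, F z = 0) →
        T F y = 0) := by
  classical
  have hnot : ∀ y x, ¬ NullPt T y x →
      ∀ (U : Set X), IsOpen U → x ∈ U →
        ∃ F : C(X, M), (∀ z : X, F z ≠ 0 → z ∈ U) ∧ T F y ≠ 0 := by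
    intro y x hx U hUo hxU
    rw [NullPt] at hx
    push_neg at hx
    exact hx U hUo hxU
  have hex : ∀ y, ∃ x, ¬ NullPt T y x := by
    intro y
    by_contra h
    push_neg at h
    obtain ⟨w, hw⟩ := exists_ne (0 : N)
    obtain ⟨F, hF⟩ := hsurj (ContinuousMap.const Y w)
    have h0 : T F y = 0 := pu_lemma T y F (fun x _ => h x)
    rw [hF] at h0
    exact hw h0
  have huniq : ∀ y x₁ x₂, ¬ NullPt T y x₁ → ¬ NullPt T y x₂ → x₁ = x₂ := by
    intro y x₁ x₂ h₁ h₂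
    by_contra hne
    obtain ⟨U₁, U₂, hU₁o, hU₂o, hx₁, hx₂, hdis⟩ := t2_separation hne
    obtain ⟨F₁, hF₁coz, hF₁⟩ := hnot y x₁ h₁ U₁ hU₁o hx₁
    obtain ⟨F₂, hF₂coz, hF₂⟩ := hnot y x₂ h₂ U₂ hU₂o hx₂
    have hdisj : ∀ x, F₁ x = 0 ∨ F₂ x = 0 := by
      intro x
      by_contra hb
      push_neg at hb
      exact (Set.disjoint_left.1 hdis) (hF₁coz x hb.1) (hF₂coz x hb.2)
    rcases hd F₁ F₂ hdisj y with h | h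
    · exact hF₁ h
    · exact hF₂ h
  let φ : Y → X := fun y => (hex y).choose
  have hφ : ∀ y, ¬ NullPt T y (φ y) := fun y => (hex y).choose_spec
  have hP : ∀ y (U : Set X), IsOpen U → φ y ∈ U →
      ∃ F : C(X, M), (∀ z : X, F z ≠ 0 → z ∈ U) ∧ T F y ≠ 0 :=
    fun y => hnot y (φ y) (hφ y)
  have hQ : ∀ y (F : C(X, M)) (W : Set X), IsOpen W → φ y ∈ W → (∀ z ∈ W, F z = 0) →
      T F y = 0 := by
    intro y F W hWo hyW hvan
    apply pu_lemma T y F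
    intro x hx
    by_contra hnull
    have hxφ : x = φ y := huniq y x (φ y) hnull (hφ y)
    have hcozW : {z | F z ≠ 0} ⊆ Wᶜ := by
      intro z hz
      intro hzW
      exact hz (hvan z hzW)
    have : x ∈ Wᶜ := closure_minimal hcozW (hWo.isClosed_compl) hx
    rw [hxφ] at this
    exact this hyW
  refine ⟨φ, ?_, hP, hQ⟩
  rw [continuous_iff_continuousAt]
  intro y
  rw [ContinuousAt]
  intro Unb hUnb
  rw [Filter.mem_map]
  rcases mem_nhds_iff.1 hUnb with ⟨U', hU'sub, hU'o, hyU'⟩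
  obtain ⟨U₁, hU₁o, hsing, hclos⟩ :=
    normal_exists_closure_subset isClosed_singleton hU'o
      (Set.singleton_subset_iff.2 hyU')
  obtain ⟨F, hFcoz, hFy⟩ := hP y U₁ hU₁o (hsing rfl)
  have hVo : IsOpen {y' | T F y' ≠ 0} := by
    have : {y' | T F y' ≠ 0} = (T F) ⁻¹' ({0}ᶜ) := rfl
    rw [this]
    exact (isOpen_compl_singleton).preimage (T F).continuous
  have hVsub : {y' | T F y' ≠ 0} ⊆ φ ⁻¹' Unb := by
    intro y' hy'
    have hmem : φ y' ∈ closure {z | F z ≠ 0} := by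
      by_contra hnc
      have h0 : T F y' = 0 := by
        apply hQ y' F (closure {z | F z ≠ 0})ᶜ (isClosed_closure.isOpen_compl) hnc
        intro z hz
        by_contra hFz
        exact hz (subset_closure hFz)
      exact hy' h0
    have : φ y' ∈ closure U₁ := closure_mono (fun z hz => hFcoz z hz) hmem
    exact hU'sub (hclos this)
  exact mem_of_superset (hVo.mem_nhds hFy) hVsub

/-- The two support maps are inverse to each other. -/
lemma psi_phi (T : C(X, M) →ₗ[𝕜] C(Y, N)) (S : C(Y, N) →ₗ[𝕜] C(X, M))
    [Nontrivial N]
    (hTS : ∀ G, T (S G) = G)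
    (hdS : ∀ G₁ G₂ : C(Y, N), (∀ z, G₁ z = 0 ∨ G₂ z = 0) → ∀ x, S G₁ x = 0 ∨ S G₂ x = 0)
    (φ : Y → X) (ψ : X → Y)
    (hPψ : ∀ x (V : Set Y), IsOpen V → ψ x ∈ V →
      ∃ G : C(Y, N), (∀ z : Y, G z ≠ 0 → z ∈ V) ∧ S G x ≠ 0)
    (hQφ : ∀ y (F : C(X, M)) (W : Set X), IsOpen W → φ y ∈ W → (∀ z ∈ W, F z = 0) →
      T F y = 0) :
    ∀ y, ψ (φ y) = y := by
  intro y
  by_contra hne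
  obtain ⟨V₀, V, hV₀o, hVo, hy₀, hy, hdis⟩ := t2_separation hne
  obtain ⟨G, hGcoz, hSG⟩ := hPψ (φ y) V₀ hV₀o hy₀
  obtain ⟨w, hw⟩ := exists_ne (0 : N)
  obtain ⟨u, hu0, hu1, hu01⟩ :=
    exists_continuous_zero_one_of_isClosed (hVo.isClosed_compl) isClosed_singleton
      (by
        rw [Set.disjoint_left]
        intro z hz hz'
        rw [Set.mem_singleton_iff] at hz'
        subst hz'
        exact hz hy)
  let H : C(Y, N) := ⟨fun z => ((u z : ℝ) : 𝕜) • w,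
    ((RCLike.continuous_ofReal).comp u.continuous).smul continuous_const⟩
  have hHy : H y = w := by
    have h1 : u y = 1 := hu1 rfl
    simp [H, h1]
  have hHG : ∀ z, H z = 0 ∨ G z = 0 := by
    intro z
    by_cases hzV : z ∈ V
    · right
      by_contra hGz
      exact (Set.disjoint_left.1 hdis) (hGcoz z hGz) hzV
    · left
      have h0 : u z = 0 := hu0 hzV
      simp [H, h0]
  have hSHSG := hdS H G hHG
  have hTSH : T (S H) y = 0 := by
    apply hQφ y (S H) {x | S G x ≠ 0} ?_ hSG
    · intro z hz
      exact (hSHSG z).resolve_right hz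
    · have : {x | S G x ≠ 0} = (S G) ⁻¹' ({0}ᶜ) := rfl
      rw [this]
      exact (isOpen_compl_singleton).preimage (S G).continuous
  rw [hTS] at hTSH
  rw [hHy] at hTSH
  exact hw hTSH

/-- The key lemma: if `F` vanishes at the support point `φ y`, then `T F y = 0`. -/
lemma claim4 (T : C(X, M) →ₗ[𝕜] C(Y, N))
    (hd : ∀ F₁ F₂ : C(X, M), (∀ x, F₁ x = 0 ∨ F₂ x = 0) → ∀ y, T F₁ y = 0 ∨ T F₂ y = 0)
    (φ : Y → X) (ψ : X → Y)
    (hψφ : ∀ y, ψ (φ y) = y) (hφψ : ∀ x, φ (ψ x) = x) (hψc : Continuous ψ)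
    (hQφ : ∀ y (F : C(X, M)) (W : Set X), IsOpen W → φ y ∈ W → (∀ z ∈ W, F z = 0) →
      T F y = 0) :
    ∀ (y : Y) (f : C(X, M)), f (φ y) = 0 → T f y = 0 := by
  classical
  intro y f hf
  by_contra hc
  set η := ‖T f y‖ with hηdef
  have hη : 0 < η := norm_pos_iff.2 hc
  set V : Set Y := {y' | η / 2 < ‖T f y'‖} with hVdef
  have hVo : IsOpen V := isOpen_lt continuous_const ((T f).continuous.norm)
  have hyV : y ∈ V := by
    simp only [V, Set.mem_setOf_eq]
    linarith
  set U : Set X := ψ ⁻¹' V with hUdef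
  have hUo : IsOpen U := hVo.preimage hψc
  have hφyU : φ y ∈ U := by
    simp only [U, Set.mem_preimage]
    rw [hψφ y]
    exact hyV
  have hstep : ∀ r : ℝ, 0 < r → ∃ x', x' ∈ U ∧ 0 < ‖f x'‖ ∧ ‖f x'‖ < r := by
    intro r hr
    by_contra hno
    push_neg at hno
    have hvan : ∀ z ∈ U ∩ {x | ‖f x‖ < r}, f z = 0 := by
      intro z hz
      by_contra hfz
      have h1 : 0 < ‖f z‖ := norm_pos_iff.2 hfz
      have := hno z hz.1 h1
      exact absurd hz.2 (not_lt.2 this)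
    have h0 : T f y = 0 := by
      apply hQφ y f (U ∩ {x | ‖f x‖ < r})
        (hUo.inter (isOpen_lt (f.continuous.norm) continuous_const))
        ⟨hφyU, by simp [hf, hr]⟩ hvan
    exact hc h0
  choose g hgU hgpos hglt using hstep
  set D := {x : X // x ∈ U ∧ 0 < ‖f x‖} with hDdef
  have hD16 : ∀ d : D, 0 < ‖f d.1‖ / 16 := fun d => by
    have := d.2.2; positivity
  let step : D → D := fun d => ⟨g (‖f d.1‖ / 16) (hD16 d), hgU _ _, hgpos _ _⟩
  let base : D := ⟨g 1 one_pos, hgU _ _, hgpos _ _⟩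
  let seq : ℕ → D := fun k => step^[k] base
  let x' : ℕ → X := fun k => (seq k).1
  let w : ℕ → ℝ := fun k => ‖f (x' k)‖
  have hwpos : ∀ k, 0 < w k := fun k => (seq k).2.2
  have hwU : ∀ k, x' k ∈ U := fun k => (seq k).2.1
  have hw16 : ∀ k, w (k + 1) < w k / 16 := by
    intro k
    have hsucc : seq (k + 1) = step (seq k) := Function.iterate_succ_apply' step k base
    show ‖f ((seq (k+1)).1)‖ < w k / 16
    rw [hsucc]
    exact hglt _ _
  have hw0 : w 0 < 1 := by
    show ‖f ((seq 0).1)‖ < 1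
    have : seq 0 = base := rfl
    rw [this]
    exact hglt _ _
  have hwsucc_le : ∀ k, w (k + 1) ≤ w k := by
    intro k
    have h1 := hw16 k
    have h2 := hwpos k
    linarith
  have hwanti : Antitone w := antitone_nat_of_succ_le hwsucc_le
  have hwsep : ∀ j k, j < k → 2 * w k < w j / 2 := by
    intro j k hjk
    have h1 : w k ≤ w (j + 1) := hwanti (Nat.succ_le_of_lt hjk)
    have h2 := hw16 j
    have h3 := hwpos j
    linarith
  have hwsmall : ∀ k, w k < (1 / 16 : ℝ) ^ k := by
    intro k
    induction k with
    | zero => simpa using hw0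
    | succ n ih =>
      have h1 := hw16 n
      have h2 : (1 / 16 : ℝ) ^ (n + 1) = (1 / 16 : ℝ) ^ n * (1 / 16) := pow_succ _ _
      rw [h2]
      have h3 : w n / 16 < (1 / 16 : ℝ) ^ n * (1 / 16) := by
        have := ih
        linarith
      linarith
  -- Urysohn bump functions adapted to the bands
  have hury : ∀ k : ℕ, ∃ θ : C(X, ℝ),
      (Set.EqOn ⇑θ 0 ((fun x => ‖f x‖) ⁻¹' (Iic (w k / 2) ∪ Ici (2 * w k)))) ∧
      (Set.EqOn ⇑θ 1 ((fun x => ‖f x‖) ⁻¹' (Icc (3 / 4 * w k) (3 / 2 * w k)))) ∧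
      (∀ x, θ x ∈ Icc (0 : ℝ) 1) := by
    intro k
    have hnf : Continuous fun x => ‖f x‖ := f.continuous.norm
    have hBcl : IsClosed ((fun x => ‖f x‖) ⁻¹' (Iic (w k / 2) ∪ Ici (2 * w k))) :=
      (isClosed_Iic.union isClosed_Ici).preimage hnf
    have hAcl : IsClosed ((fun x => ‖f x‖) ⁻¹' (Icc (3 / 4 * w k) (3 / 2 * w k))) :=
      isClosed_Icc.preimage hnf
    have hdisAB : Disjoint ((fun x => ‖f x‖) ⁻¹' (Iic (w k / 2) ∪ Ici (2 * w k)))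
        ((fun x => ‖f x‖) ⁻¹' (Icc (3 / 4 * w k) (3 / 2 * w k))) := by
      rw [Set.disjoint_left]
      intro x hx hx2
      have hk := hwpos k
      rcases hx with hx | hx
      · have h1 : ‖f x‖ ≤ w k / 2 := hx
        have h2 := hx2.1
        linarith
      · have h1 : 2 * w k ≤ ‖f x‖ := hx
        have h2 := hx2.2
        linarith
    exact exists_continuous_zero_one_of_isClosed hBcl hAcl hdisAB
  choose θ hθ0 hθ1 hθ01 using hury
  let s : ℕ → C(X, M) := fun k =>
    ⟨fun x => ((θ k x : ℝ) : 𝕜) • f x,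
      ((RCLike.continuous_ofReal).comp (θ k).continuous).smul f.continuous⟩
  have hs_out : ∀ k x, ¬(w k / 2 < ‖f x‖ ∧ ‖f x‖ < 2 * w k) → s k x = 0 := by
    intro k x hx
    have hmem : ‖f x‖ ∈ Iic (w k / 2) ∪ Ici (2 * w k) := by
      by_contra hmem
      rw [Set.mem_union] at hmem
      push_neg at hmem
      exact hx ⟨not_le.1 hmem.1, not_le.1 hmem.2⟩
    have h0 : θ k x = 0 := hθ0 k hmem
    simp [s, h0]
  have hs_band : ∀ k x, s k x ≠ 0 → w k / 2 < ‖f x‖ ∧ ‖f x‖ < 2 * w k := by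
    intro k x hx
    by_contra hb
    exact hx (hs_out k x hb)
  have hs_disj : ∀ j k, j ≠ k → ∀ x, s j x = 0 ∨ s k x = 0 := by
    intro j k hjk x
    by_contra hb
    push_neg at hb
    have h1 := hs_band j x hb.1
    have h2 := hs_band k x hb.2
    rcases lt_or_gt_of_ne hjk with h | h
    · have := hwsep j k h
      linarith [h1.1, h2.2]
    · have := hwsep k j h
      linarith [h1.2, h2.1]
  have hs_norm : ∀ k x, ‖s k x‖ ≤ 2 * w k := by
    intro k x
    by_cases hb : s k x = 0
    · rw [hb, norm_zero]
      have := hwpos k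
      positivity
    · have hband := hs_band k x hb
      have h1 : ‖s k x‖ = ‖((θ k x : ℝ) : 𝕜)‖ * ‖f x‖ := by
        show ‖((θ k x : ℝ) : 𝕜) • f x‖ = _
        rw [norm_smul]
      rw [h1]
      have h2 : ‖((θ k x : ℝ) : 𝕜)‖ = |θ k x| := RCLike.norm_ofReal _
      rw [h2]
      have h3 : |θ k x| ≤ 1 := by
        have := hθ01 k x
        rw [abs_le]
        constructor <;> [linarith [this.1]; exact this.2]
      calc |θ k x| * ‖f x‖ ≤ 1 * (2 * w k) := by
            apply mul_le_mul h3 hband.2.le (norm_nonneg _) one_pos.le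
        _ = 2 * w k := one_mul _
  have hs_near : ∀ k z, 3 / 4 * w k < ‖f z‖ → ‖f z‖ < 3 / 2 * w k → (f - s k) z = 0 := by
    intro k z h1 h2
    have hmem : ‖f z‖ ∈ Icc (3 / 4 * w k) (3 / 2 * w k) := ⟨h1.le, h2.le⟩
    have hθz : θ k z = 1 := hθ1 k hmem
    show f z - s k z = 0
    show f z - ((θ k z : ℝ) : 𝕜) • f z = 0
    rw [hθz]
    norm_num
  let y' : ℕ → Y := fun k => ψ (x' k)
  have hy'V : ∀ k, y' k ∈ V := fun k => hwU k
  have hTf_eq : ∀ k, T f (y' k) = T (s k) (y' k) := by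
    intro k
    have hO'o : IsOpen ((fun x => ‖f x‖) ⁻¹' (Ioo (3 / 4 * w k) (3 / 2 * w k))) :=
      isOpen_Ioo.preimage f.continuous.norm
    have hφmem : φ (y' k) ∈ (fun x => ‖f x‖) ⁻¹' (Ioo (3 / 4 * w k) (3 / 2 * w k)) := by
      show ‖f (φ (y' k))‖ ∈ Ioo (3 / 4 * w k) (3 / 2 * w k)
      rw [show φ (y' k) = x' k from hφψ (x' k)]
      have := hwpos k
      constructor
      · show 3 / 4 * w k < ‖f (x' k)‖
        show 3 / 4 * w k < w k
        linarith
      · show ‖f (x' k)‖ < 3 / 2 * w k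
        show w k < 3 / 2 * w k
        linarith
    have h0 : T (f - s k) (y' k) = 0 := by
      apply hQφ (y' k) (f - s k) _ hO'o hφmem
      intro z hz
      exact hs_near k z hz.1 hz.2
    rw [map_sub] at h0
    have h0' : T f (y' k) - T (s k) (y' k) = 0 := by
      simpa using h0
    exact sub_eq_zero.1 h0'
  have hTs_lb : ∀ k, η / 2 < ‖T (s k) (y' k)‖ := by
    intro k
    have hmem := hy'V k
    rw [← hTf_eq k]
    exact hmem
  -- amplification coefficients
  let a : ℕ → 𝕜 := fun k => ((((2 : ℝ)⁻¹) ^ k / w k : ℝ) : 𝕜)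
  have ha_norm : ∀ k, ‖a k‖ = ((2 : ℝ)⁻¹) ^ k / w k := by
    intro k
    have hpos : 0 < ((2 : ℝ)⁻¹) ^ k / w k := by
      have := hwpos k
      positivity
    rw [show a k = ((((2 : ℝ)⁻¹) ^ k / w k : ℝ) : 𝕜) from rfl, RCLike.norm_ofReal,
      abs_of_pos hpos]
  have ha_ne : ∀ k, a k ≠ 0 := by
    intro k
    have h1 : ‖a k‖ ≠ 0 := by
      rw [ha_norm k]
      have := hwpos k
      positivity
    exact fun h => h1 (by rw [h, norm_zero])
  let Qf : ℕ → C(X, M) := fun k => a k • s k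
  have hQf_apply : ∀ k x, Qf k x = a k • s k x := fun k x => rfl
  have hQf_zero : ∀ k x, s k x = 0 → Qf k x = 0 := by
    intro k x h
    rw [hQf_apply, h, smul_zero]
  have hQfn : ∀ k x, ‖Qf k x‖ ≤ 2 * ((2 : ℝ)⁻¹) ^ k := by
    intro k x
    rw [hQf_apply, norm_smul, ha_norm]
    have h1 : ‖s k x‖ ≤ 2 * w k := hs_norm k x
    have hw := hwpos k
    calc ((2 : ℝ)⁻¹) ^ k / w k * ‖s k x‖ ≤ ((2 : ℝ)⁻¹) ^ k / w k * (2 * w k) := by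
          apply mul_le_mul_of_nonneg_left h1
          positivity
      _ = 2 * ((2 : ℝ)⁻¹) ^ k := by
          field_simp
  let Q : X → M := fun x => ∑' k, Qf k x
  have hQ_single : ∀ k x, s k x ≠ 0 → Q x = Qf k x := by
    intro k x hx
    apply tsum_eq_single k
    intro j hj
    exact hQf_zero j x ((hs_disj j k hj x).resolve_right hx)
  have hQ_zero : ∀ x, (∀ k, s k x = 0) → Q x = 0 := by
    intro x hx
    have : (fun k => Qf k x) = fun _ => 0 := funext fun k => hQf_zero k x (hx k)
    show ∑' k, Qf k x = 0
    rw [this]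
    exact tsum_zero
  let P : ℕ → C(X, M) := fun m => ∑ k ∈ Finset.range m, Qf k
  have hP_apply : ∀ m x, P m x = ∑ k ∈ Finset.range m, Qf k x := by
    intro m x
    rw [show P m = ∑ k ∈ Finset.range m, Qf k from rfl, ContinuousMap.sum_apply]
  have hPQ : ∀ m x, ‖Q x - P m x‖ ≤ 2 * ((2 : ℝ)⁻¹) ^ m := by
    intro m x
    by_cases hx : ∃ k, s k x ≠ 0
    · obtain ⟨k₀, hk₀⟩ := hx
      have hQx := hQ_single k₀ x hk₀
      by_cases hlt : k₀ < m
      · have hsum : ∑ k ∈ Finset.range m, Qf k x = Qf k₀ x := by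
          apply Finset.sum_eq_single_of_mem k₀ (Finset.mem_range.2 hlt)
          intro j _ hj
          exact hQf_zero j x ((hs_disj j k₀ hj x).resolve_right hk₀)
        rw [hQx, hP_apply, hsum, sub_self, norm_zero]
        positivity
      · have hge : m ≤ k₀ := not_lt.1 hlt
        have hsum : ∑ k ∈ Finset.range m, Qf k x = 0 := by
          apply Finset.sum_eq_zero
          intro j hj
          have hjne : j ≠ k₀ := by
            intro h
            rw [h] at hj
            exact hlt (Finset.mem_range.1 hj)
          exact hQf_zero j x ((hs_disj j k₀ hjne x).resolve_right hk₀)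
        rw [hQx, hP_apply, hsum, sub_zero]
        calc ‖Qf k₀ x‖ ≤ 2 * ((2 : ℝ)⁻¹) ^ k₀ := hQfn _ _
          _ ≤ 2 * ((2 : ℝ)⁻¹) ^ m := by
              have : ((2 : ℝ)⁻¹) ^ k₀ ≤ ((2 : ℝ)⁻¹) ^ m :=
                pow_le_pow_of_le_one (by norm_num) (by norm_num) hge
              linarith
    · push_neg at hx
      have hsum : ∑ k ∈ Finset.range m, Qf k x = 0 :=
        Finset.sum_eq_zero fun j _ => hQf_zero j x (hx j)
      rw [hQ_zero x hx, hP_apply, hsum, sub_zero, norm_zero]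
      positivity
  have hQcont : Continuous Q := by
    have htu : TendstoUniformly (fun m x => P m x) Q atTop := by
      rw [Metric.tendstoUniformly_iff]
      intro ε hε
      have hlim : Tendsto (fun m : ℕ => 2 * ((2 : ℝ)⁻¹) ^ m) atTop (𝓝 0) := by
        have h1 := tendsto_pow_atTop_nhds_zero_of_lt_one
          (by norm_num : (0:ℝ) ≤ 2⁻¹) (by norm_num : (2:ℝ)⁻¹ < 1)
        simpa using h1.const_mul 2
      filter_upwards [hlim.eventually (gt_mem_nhds hε)] with m hm x
      rw [dist_eq_norm]
      calc ‖Q x - P m x‖ ≤ 2 * ((2 : ℝ)⁻¹) ^ m := hPQ m x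
        _ < ε := hm
    exact htu.continuous (Frequently.of_forall fun m => (P m).continuous)
  let QC : C(X, M) := ⟨Q, hQcont⟩
  have hTQC : ∀ k, T QC (y' k) = a k • T (s k) (y' k) := by
    intro k
    have hdisj : ∀ x, (QC - Qf k) x = 0 ∨ (Qf k) x = 0 := by
      intro x
      by_cases hs0 : s k x = 0
      · right
        exact hQf_zero k x hs0
      · left
        show QC x - Qf k x = 0
        show Q x - Qf k x = 0
        rw [hQ_single k x hs0, sub_self]
    rcases hd (QC - Qf k) (Qf k) hdisj (y' k) with h | h
    · rw [map_sub] at h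
      have h' : T QC (y' k) - T (Qf k) (y' k) = 0 := by simpa using h
      have h'' : T QC (y' k) = T (Qf k) (y' k) := sub_eq_zero.1 h'
      rw [h'']
      show T (a k • s k) (y' k) = a k • T (s k) (y' k)
      rw [map_smul]
      rfl
    · exfalso
      have h1 : T (Qf k) (y' k) = a k • T (s k) (y' k) := by
        show T (a k • s k) (y' k) = a k • T (s k) (y' k)
        rw [map_smul]
        rfl
      rw [h1] at h
      rcases smul_eq_zero.1 h with h2 | h2
      · exact ha_ne k h2
      · have := hTs_lb k
        rw [h2, norm_zero] at this
        linarith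
  obtain ⟨k, hk⟩ := pow_unbounded_of_one_lt (‖T QC‖ / (η / 2)) (by norm_num : (1:ℝ) < 8)
  have hlb : (8 : ℝ) ^ k * (η / 2) ≤ ‖T QC (y' k)‖ := by
    rw [hTQC k, norm_smul, ha_norm]
    have h1 : ((2 : ℝ)⁻¹) ^ k / ((1 / 16 : ℝ) ^ k) ≤ ((2 : ℝ)⁻¹) ^ k / w k := by
      apply div_le_div_of_nonneg_left _ (hwpos k) (hwsmall k).le
      positivity
    have h2 : ((2 : ℝ)⁻¹) ^ k / ((1 / 16 : ℝ) ^ k) = (8 : ℝ) ^ k := by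
      rw [← div_pow]
      norm_num
    have h3 : η / 2 ≤ ‖T (s k) (y' k)‖ := (hTs_lb k).le
    calc (8 : ℝ) ^ k * (η / 2)
        = (((2 : ℝ)⁻¹) ^ k / ((1 / 16 : ℝ) ^ k)) * (η / 2) := by rw [h2]
      _ ≤ (((2 : ℝ)⁻¹) ^ k / w k) * ‖T (s k) (y' k)‖ := by
          apply mul_le_mul h1 h3 (by positivity) (by positivity)
  have hub : ‖T QC (y' k)‖ ≤ ‖T QC‖ := (T QC).norm_coe_le_norm _
  have hfin : ‖T QC‖ < (8 : ℝ) ^ k * (η / 2) := by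
    rwa [div_lt_iff₀ (by positivity : (0:ℝ) < η / 2)] at hk
  linarith

end Aux

theorem strictly_biseparating_is_weighted_composition
    {𝕜 : Type*} [RCLike 𝕜]
    {N₁ N₂ : Type*} [NormedAddCommGroup N₁] [NormedSpace 𝕜 N₁] [Nontrivial N₁]
    [NormedAddCommGroup N₂] [NormedSpace 𝕜 N₂] [Nontrivial N₂]
    {X₁ X₂ : Type*} [TopologicalSpace X₁] [CompactSpace X₁] [T2Space X₁]
    [TopologicalSpace X₂] [CompactSpace X₂] [T2Space X₂]
    (T : C(X₁, N₁) →ₗ[𝕜] C(X₂, N₂)) (hbij : Function.Bijective T)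
    (hstrict : ∀ F₁ F₂ : C(X₁, N₁),
      (∀ x, ‖F₁ x‖ * ‖F₂ x‖ = 0) ↔ (∀ y, ‖T F₁ y‖ * ‖T F₂ y‖ = 0)) :
    ∃ (φ : X₂ ≃ₜ X₁) (J : X₂ → (N₁ →ₗ[𝕜] N₂)),
      (∀ x, Function.Bijective (J x)) ∧
        ∀ (x : X₂) (F : C(X₁, N₁)), T F x = J x (F (φ x)) := by
  classical
  set e : C(X₁, N₁) ≃ₗ[𝕜] C(X₂, N₂) := LinearEquiv.ofBijective T hbij with hedef
  set SL : C(X₂, N₂) →ₗ[𝕜] C(X₁, N₁) := e.symm.toLinearMap with hSLdef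
  have hST : ∀ F, SL (T F) = F := by
    intro F
    show e.symm (T F) = F
    have : T F = e F := rfl
    rw [this, e.symm_apply_apply]
  have hTS : ∀ G, T (SL G) = G := by
    intro G
    show T (e.symm G) = G
    have : T (e.symm G) = e (e.symm G) := rfl
    rw [this, e.apply_symm_apply]
  have hdT : ∀ F₁ F₂ : C(X₁, N₁), (∀ x, F₁ x = 0 ∨ F₂ x = 0) →
      ∀ y, T F₁ y = 0 ∨ T F₂ y = 0 := by
    intro F₁ F₂ h y
    have h' : ∀ x, ‖F₁ x‖ * ‖F₂ x‖ = 0 := by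
      intro x
      rcases h x with h | h <;> simp [h]
    have := (hstrict F₁ F₂).mp h' y
    rcases mul_eq_zero.1 this with h'' | h''
    · exact Or.inl (norm_eq_zero.1 h'')
    · exact Or.inr (norm_eq_zero.1 h'')
  have hdS : ∀ G₁ G₂ : C(X₂, N₂), (∀ z, G₁ z = 0 ∨ G₂ z = 0) →
      ∀ x, SL G₁ x = 0 ∨ SL G₂ x = 0 := by
    intro G₁ G₂ h x
    have h' : ∀ y, ‖T (SL G₁) y‖ * ‖T (SL G₂) y‖ = 0 := by
      intro y
      rw [hTS, hTS]
      rcases h y with h | h <;> simp [h]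
    have := (hstrict (SL G₁) (SL G₂)).mpr h' x
    rcases mul_eq_zero.1 this with h'' | h''
    · exact Or.inl (norm_eq_zero.1 h'')
    · exact Or.inr (norm_eq_zero.1 h'')
  have hsurjT : ∀ G : C(X₂, N₂), ∃ F, T F = G := fun G => ⟨SL G, hTS G⟩
  have hsurjS : ∀ F : C(X₁, N₁), ∃ G, SL G = F := fun F => ⟨T F, hST F⟩
  obtain ⟨φ, hφc, hφP, hφQ⟩ := exists_phi T hdT hsurjT
  obtain ⟨ψ, hψc, hψP, hψQ⟩ := exists_phi SL hdS hsurjS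
  have hψφ : ∀ y, ψ (φ y) = y := psi_phi T SL hTS hdS φ ψ hψP hφQ
  have hφψ : ∀ x, φ (ψ x) = x := psi_phi SL T hST hdT ψ φ hφP hψQ
  have hc4T : ∀ (y : X₂) (f : C(X₁, N₁)), f (φ y) = 0 → T f y = 0 :=
    claim4 T hdT φ ψ hψφ hφψ hψc hφQ
  have hc4S : ∀ (x : X₁) (g : C(X₂, N₂)), g (ψ x) = 0 → SL g x = 0 :=
    claim4 SL hdS ψ φ hφψ hψφ hφc hψQ
  let φh : X₂ ≃ₜ X₁ :=
    { toFun := φ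
      invFun := ψ
      left_inv := hψφ
      right_inv := hφψ
      continuous_toFun := hφc
      continuous_invFun := hψc }
  let J : X₂ → (N₁ →ₗ[𝕜] N₂) := fun y =>
    { toFun := fun v => T (ContinuousMap.const X₁ v) y
      map_add' := by
        intro v₁ v₂
        show T (ContinuousMap.const X₁ (v₁ + v₂)) y =
          T (ContinuousMap.const X₁ v₁) y + T (ContinuousMap.const X₁ v₂) y
        have : ContinuousMap.const X₁ (v₁ + v₂) =
            ContinuousMap.const X₁ v₁ + ContinuousMap.const X₁ v₂ := by
          ext z; simp
        rw [this, map_add]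
        rfl
      map_smul' := by
        intro c v
        show T (ContinuousMap.const X₁ (c • v)) y = c • T (ContinuousMap.const X₁ v) y
        have : ContinuousMap.const X₁ (c • v) = c • ContinuousMap.const X₁ v := by
          ext z; simp
        rw [this, map_smul]
        rfl }
  have hTJ : ∀ (y : X₂) (F : C(X₁, N₁)), T F y = J y (F (φ y)) := by
    intro y F
    have h0 : (F - ContinuousMap.const X₁ (F (φ y))) (φ y) = 0 := by
      simp
    have h1 := hc4T y _ h0
    rw [map_sub] at h1
    have h2 : T F y - T (ContinuousMap.const X₁ (F (φ y))) y = 0 := by simpa using h1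
    have := sub_eq_zero.1 h2
    exact this
  have hSJ : ∀ (x : X₁) (G : C(X₂, N₂)), SL G x = SL (ContinuousMap.const X₂ (G (ψ x))) x := by
    intro x G
    have h0 : (G - ContinuousMap.const X₂ (G (ψ x))) (ψ x) = 0 := by simp
    have h1 := hc4S x _ h0
    rw [map_sub] at h1
    have h2 : SL G x - SL (ContinuousMap.const X₂ (G (ψ x))) x = 0 := by simpa using h1
    exact sub_eq_zero.1 h2
  refine ⟨φh, J, ?_, fun y F => hTJ y F⟩
  intro y
  constructor
  · intro v₁ v₂ hv
    have hv' : J y (v₁ - v₂) = 0 := by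
      rw [map_sub, hv, sub_self]
    set v := v₁ - v₂ with hvdef
    have hG : (T (ContinuousMap.const X₁ v)) (ψ (φ y)) = 0 := by
      rw [hψφ y]
      exact hv'
    have h1 : SL (T (ContinuousMap.const X₁ v)) (φ y) = 0 := hc4S (φ y) _ hG
    rw [hST] at h1
    have h2 : v = 0 := h1
    rw [hvdef] at h2
    exact sub_eq_zero.1 h2
  · intro wtarget
    refine ⟨SL (ContinuousMap.const X₂ wtarget) (φ y), ?_⟩
    have h1 := hTJ y (SL (ContinuousMap.const X₂ wtarget))
    rw [hTS] at h1
    have h2 : ContinuousMap.const X₂ wtarget y = wtarget := rfl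
    rw [h2] at h1
    exact h1.symm
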